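/- Let β > 0, m ∈ ℝ, let γ₁,…,γ_N be distinct positive real numbers and c₁,…,c_N ∈ ℂ. Define G(x) = m − Σ_{k=1}^N 2 Re( c_k e^{iγ_k log x} / (β + iγ_k) ) for x > 1. Then G admits a limiting logarithmic distribution μ; moreover μ is the pushforward of the normalized Haar measure on A(γ₁/2π,…,γ_N/2π) ⊆ 𝕋^N under the map (θ₁,…,θ_N) ↦ m − Σ_{k=1}^N 2 Re( c_k e^{2πiθ_k} / (β + iγ_k) ). -/

import Mathlib

open MeasureTheory Filter Topology Complex

set_option maxHeartbeats 2000000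
set_option synthInstance.maxHeartbeats 400000

noncomputable section

/-- The one-parameter group homomorphism `y ↦ (y γ₁, …, y γ_N)` from `ℝ` to the torus
`𝕋^N = (ℝ/ℤ)^N`. -/
def orbitHom {N : ℕ} (γ : Fin N → ℝ) : ℝ →+ (Fin N → AddCircle (1 : ℝ)) where
  toFun y := fun i => ((y * γ i : ℝ) : AddCircle (1 : ℝ))
  map_zero' := by funext i; simp
  map_add' x y := by funext i; simp [add_mul]

/-- `A(γ)`: the topological closure in `𝕋^N` of the one-parameter subgroup
`{(yγ₁,…,yγ_N) mod ℤ^N : y ∈ ℝ}`. -/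
def torusSubgroup {N : ℕ} (γ : Fin N → ℝ) : AddSubgroup (Fin N → AddCircle (1 : ℝ)) :=
  (orbitHom γ).range.topologicalClosure

/-- `ω` is the normalized Haar measure of the (compact) subgroup `A`:
a probability measure supported on `A` and invariant under translation by elements of `A`. -/
def IsHaarOn {G : Type*} [AddCommGroup G] [TopologicalSpace G] [MeasurableSpace G]
    (A : AddSubgroup G) (ω : Measure G) : Prop :=
  IsProbabilityMeasure ω ∧ ω ((A : Set G)ᶜ) = 0 ∧ ∀ a ∈ A, ω.map (· + a) = ω

/-- `F : ℝ → ℝ` admits the Borel probability measure `μ` as limiting logarithmic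
distribution: for every bounded Lipschitz `g : ℝ → ℝ`,
`(1/Y) ∫₂^Y g(F(e^y)) dy → ∫ g dμ` as `Y → ∞`. -/
def HasLimitingLogDistribution (F : ℝ → ℝ) (μ : Measure ℝ) : Prop :=
  IsProbabilityMeasure μ ∧
  ∀ g : ℝ → ℝ, (∃ C, LipschitzWith C g) → (∃ B, ∀ x, |g x| ≤ B) →
    Tendsto (fun Y : ℝ => (1 / Y) * ∫ y in (2:ℝ)..Y, g (F (Real.exp y)))
      atTop (𝓝 (∫ t, g t ∂μ))

/-! ### Auxiliary material -/

abbrev Torus (N : ℕ) := Fin N → AddCircle (1 : ℝ)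

namespace Stmt6Aux

variable {N : ℕ}

/-! #### Circle lemmas -/

lemma circle_coe_zpow (z : Circle) (n : ℤ) : ((z ^ n : Circle) : ℂ) = (z : ℂ) ^ n :=
  MonoidHom.map_zpow' Circle.coeHom (fun x => Circle.coe_inv x) z n

lemma circle_exp_zpow (x : ℝ) (n : ℤ) : (Circle.exp x) ^ n = Circle.exp (n * x) := by
  ext
  rw [circle_coe_zpow, Circle.coe_exp, Circle.coe_exp, ← Complex.exp_int_mul]
  push_cast; ring_nf

lemma circle_exp_sum {ι : Type*} (s : Finset ι) (f : ι → ℝ) :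
    ∏ i ∈ s, Circle.exp (f i) = Circle.exp (∑ i ∈ s, f i) := by
  classical
  induction s using Finset.induction with
  | empty => simp
  | @insert a s h ih => rw [Finset.prod_insert h, Finset.sum_insert h, ih, Circle.exp_add]

/-! #### Characters of the torus -/

/-- The character of the torus indexed by `n : ℤ^N`. -/
def char (n : Fin N → ℤ) : C(Torus N, ℂ) where
  toFun θ := ((∏ k, (AddCircle.toCircle (θ k)) ^ (n k) : Circle) : ℂ)
  continuous_toFun := by
    have h1 : Continuous (fun θ : Torus N => (∏ k, (AddCircle.toCircle (θ k)) ^ (n k) : Circle)) :=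
      continuous_finset_prod _ fun k _ =>
        (continuous_zpow (n k)).comp (AddCircle.continuous_toCircle.comp (continuous_apply k))
    exact continuous_subtype_val.comp h1

lemma char_apply (n : Fin N → ℤ) (θ : Torus N) :
    char n θ = ((∏ k, (AddCircle.toCircle (θ k)) ^ (n k) : Circle) : ℂ) := rfl

lemma char_zero' : char (0 : Fin N → ℤ) = 1 := by
  ext θ; simp [char_apply]

lemma char_mul (n m : Fin N → ℤ) : char n * char m = char (n + m) := by
  ext θ
  simp only [ContinuousMap.mul_apply, char_apply, Pi.add_apply]
  rw [← Circle.coe_mul, ← Finset.prod_mul_distrib]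
  exact congrArg _ (Finset.prod_congr rfl fun k _ => (zpow_add _ _ _).symm)

lemma star_char (n : Fin N → ℤ) : star (char n) = char (-n) := by
  ext θ
  simp only [ContinuousMap.star_apply, char_apply, Pi.neg_apply, Complex.star_def]
  rw [← Circle.coe_inv_eq_conj, ← Finset.prod_inv_distrib]
  exact congrArg _ (Finset.prod_congr rfl fun k _ => (zpow_neg _ _).symm)

lemma char_add_point (n : Fin N → ℤ) (x a : Torus N) :
    char n (x + a) = char n x * char n a := by
  simp only [char_apply, Pi.add_apply]
  rw [← Circle.coe_mul, ← Finset.prod_mul_distrib]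
  refine congrArg _ (Finset.prod_congr rfl fun k _ => ?_)
  rw [AddCircle.toCircle_add, mul_zpow]

lemma char_single (k : Fin N) (θ : Torus N) :
    char (Pi.single k 1) θ = ((AddCircle.toCircle (θ k) : Circle) : ℂ) := by
  rw [char_apply]
  exact congrArg _ (by
    rw [Finset.prod_eq_single k (fun j _ hj => by simp [Pi.single_eq_of_ne hj]) (by simp)]
    simp)

/-! #### Characters along the orbit -/

lemma toCircle_orbit (γ : Fin N → ℝ) (y : ℝ) (k : Fin N) :
    AddCircle.toCircle (orbitHom (fun j => γ j / (2 * Real.pi)) y k)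
      = Circle.exp (γ k * y) := by
  show AddCircle.toCircle ((y * (γ k / (2 * Real.pi)) : ℝ) : AddCircle (1:ℝ)) = _
  rw [AddCircle.toCircle_apply_mk]
  congr 1
  have h2 : (2 : ℝ) * Real.pi ≠ 0 := by positivity
  field_simp

lemma char_orbit (n : Fin N → ℤ) (γ : Fin N → ℝ) (y : ℝ) :
    char n (orbitHom (fun j => γ j / (2 * Real.pi)) y)
      = Complex.exp (((∑ k, (n k : ℝ) * γ k : ℝ) : ℂ) * I * y) := by
  rw [char_apply]
  have : ∀ k : Fin N, (AddCircle.toCircle (orbitHom (fun j => γ j / (2 * Real.pi)) y k)) ^ (n k)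
      = Circle.exp ((n k : ℝ) * γ k * y) := by
    intro k
    rw [toCircle_orbit γ y k, circle_exp_zpow]
    congr 1
    push_cast
    ring
  simp only [this]
  rw [circle_exp_sum, Circle.coe_exp]
  congr 1
  rw [← Finset.sum_mul]
  push_cast
  ring

/-! #### Weyl averages -/

lemma weyl_tendsto (t : ℝ) :
    Tendsto (fun Y : ℝ => (1/(Y:ℂ)) * ∫ y in (2:ℝ)..Y, Complex.exp ((t : ℂ) * I * y))
      atTop (𝓝 (if t = 0 then 1 else 0)) := by
  by_cases ht : t = 0
  · simp only [ht, if_pos rfl, ofReal_zero, zero_mul, Complex.exp_zero]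
    have heq : ∀ Y : ℝ, (1/(Y:ℂ)) * ∫ y in (2:ℝ)..Y, (1:ℂ) = ((1/Y * (Y - 2) : ℝ) : ℂ) := by
      intro Y
      rw [intervalIntegral.integral_const]
      rw [Complex.real_smul]
      push_cast
      ring
    simp only [heq]
    have hlim : Tendsto (fun Y : ℝ => 1/Y * (Y - 2)) atTop (𝓝 1) := by
      have h0 : Tendsto (fun Y : ℝ => 1/Y) atTop (𝓝 0) := by
        simpa [one_div] using tendsto_inv_atTop_zero
      have h2 : Tendsto (fun Y : ℝ => 1 - 2*(1/Y)) atTop (𝓝 1) := by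
        simpa using tendsto_const_nhds (x := (1:ℝ)).sub (h0.const_mul 2)
      refine h2.congr' ?_
      filter_upwards [eventually_gt_atTop (0:ℝ)] with Y hY
      field_simp
    exact (Complex.continuous_ofReal.tendsto 1).comp (by simpa using hlim)
  · rw [if_neg ht]
    have hc : (t : ℂ) * I ≠ 0 := by
      simp [Complex.ext_iff, ht, I_ne_zero, mul_ne_zero]
    have key : ∀ Y : ℝ, ‖(1/(Y:ℂ)) * ∫ y in (2:ℝ)..Y, Complex.exp ((t : ℂ) * I * y)‖
        ≤ (1/|Y|) * (2 / |t|) := by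
      intro Y
      rw [norm_mul, integral_exp_mul_complex hc]
      gcongr
      · simp [one_div]
      rw [norm_div]
      have e1 : ∀ s : ℝ, ‖Complex.exp ((t:ℂ)*I*s)‖ = 1 := by
        intro s
        rw [Complex.norm_exp]
        have : ((t:ℂ)*I*s).re = 0 := by simp [Complex.mul_re]
        rw [this, Real.exp_zero]
      have h1 : ‖Complex.exp ((t:ℂ)*I*(Y:ℝ)) - Complex.exp ((t:ℂ)*I*((2:ℝ):ℂ))‖ ≤ 2 := by
        refine (norm_sub_le _ _).trans ?_
        rw [e1 Y]
        have := e1 2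
        push_cast at this ⊢
        rw [this]; norm_num
      have h2 : ‖(t:ℂ)*I‖ = |t| := by
        rw [norm_mul, Complex.norm_I, mul_one, Complex.norm_real, Real.norm_eq_abs]
      rw [h2]
      gcongr
    have hlim : Tendsto (fun Y : ℝ => (1/|Y|) * (2/|t|)) atTop (𝓝 0) := by
      have h3 : Tendsto (fun Y : ℝ => 1/|Y|) atTop (𝓝 0) := by
        simpa [one_div, Function.comp_def] using
          (tendsto_inv_atTop_zero (𝕜 := ℝ)).comp tendsto_abs_atTop_atTop
      simpa using h3.mul_const (2/|t|)
    exact squeeze_zero_norm key hlim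

/-! #### The Haar measure on the closed subgroup -/

variable (A : AddSubgroup (Torus N)) (h : IsClosed (A : Set (Torus N)))

/-- Haar measure of a closed subgroup of the torus, pushed to the torus. -/
def haarA : Measure (Torus N) :=
  letI : CompactSpace A := isCompact_iff_compactSpace.mp h.isCompact
  letI : BorelSpace A := Subtype.borelSpace _
  (Measure.addHaarMeasure (⊤ : TopologicalSpace.PositiveCompacts A)).map (Subtype.val)

lemma haarA_prob : IsProbabilityMeasure (haarA A h) := by
  letI : CompactSpace A := isCompact_iff_compactSpace.mp h.isCompact
  letI : BorelSpace A := Subtype.borelSpace _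
  constructor
  rw [haarA, Measure.map_apply (by fun_prop) MeasurableSet.univ]
  simp only [Set.preimage_univ]
  have := Measure.addHaarMeasure_self (K₀ := (⊤ : TopologicalSpace.PositiveCompacts A))
  simpa using this

lemma haarA_compl : haarA A h ((A : Set (Torus N))ᶜ) = 0 := by
  letI : CompactSpace A := isCompact_iff_compactSpace.mp h.isCompact
  letI : BorelSpace A := Subtype.borelSpace _
  rw [haarA, Measure.map_apply (by fun_prop) (h.measurableSet.compl)]
  have he : (Subtype.val : A → Torus N) ⁻¹' ((A : Set (Torus N))ᶜ) = ∅ := by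
    ext x; simp [x.2]
  rw [he]; exact measure_empty

lemma haarA_inv (a : Torus N) (ha : a ∈ A) : (haarA A h).map (· + a) = haarA A h := by
  letI : CompactSpace A := isCompact_iff_compactSpace.mp h.isCompact
  letI : BorelSpace A := Subtype.borelSpace _
  rw [haarA, Measure.map_map (by fun_prop) (by fun_prop)]
  have key : ((· + a) ∘ (Subtype.val : A → Torus N)) = Subtype.val ∘ (· + (⟨a, ha⟩ : A)) := rfl
  rw [key, ← Measure.map_map (by fun_prop) (by fun_prop), map_add_right_eq_self]

lemma haarA_isHaarOn : IsHaarOn A (haarA A h) :=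
  ⟨haarA_prob A h, haarA_compl A h, fun a ha => haarA_inv A h a ha⟩

/-! #### Integrals of characters against the Haar measure -/

variable (γ : Fin N → ℝ)

lemma orbit_mem (y : ℝ) : orbitHom γ y ∈ torusSubgroup γ :=
  (orbitHom γ).range.le_topologicalClosure ⟨y, rfl⟩

lemma torusSubgroup_isClosed : IsClosed ((torusSubgroup γ : AddSubgroup (Torus N)) : Set (Torus N)) :=
  (orbitHom γ).range.isClosed_topologicalClosure

lemma integrable_cont (ω : Measure (Torus N)) [IsFiniteMeasure ω] (g : C(Torus N, ℂ)) :
    Integrable g ω :=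
  g.continuous.integrable_of_hasCompactSupport (HasCompactSupport.of_compactSpace _)

variable (ω : Measure (Torus N))

/-- Integral of a character against the Haar measure of `A(γ/2π)`. -/
lemma integral_char (hω : IsHaarOn (torusSubgroup (fun j => γ j / (2 * Real.pi))) ω)
    (n : Fin N → ℤ) :
    ∫ x, char n x ∂ω = if (∑ k, (n k : ℝ) * γ k) = 0 then 1 else 0 := by
  obtain ⟨hprob, hnull, hinv⟩ := hω
  set γ' := fun j => γ j / (2 * Real.pi)
  set t : ℝ := ∑ k, (n k : ℝ) * γ k with ht
  by_cases h0 : t = 0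
  · rw [if_pos h0]
    have hone : ∀ x ∈ (torusSubgroup γ' : AddSubgroup (Torus N)), char n x = 1 := by
      have hcl : IsClosed {x : Torus N | char n x = 1} :=
        isClosed_eq (char n).continuous continuous_const
      have hsub : ((orbitHom γ').range : Set (Torus N)) ⊆ {x : Torus N | char n x = 1} := by
        rintro x ⟨y, rfl⟩
        show char n (orbitHom γ' y) = 1
        rw [char_orbit n γ y, ← ht, h0]
        simp
      intro x hx
      exact closure_minimal hsub hcl hx
    have hae : (fun x => char n x) =ᵐ[ω] (fun _ => (1:ℂ)) := by
      rw [Filter.eventuallyEq_iff_exists_mem]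
      refine ⟨(torusSubgroup γ' : AddSubgroup (Torus N)), ?_, fun x hx => hone x hx⟩
      rw [mem_ae_iff]
      exact hnull
    rw [integral_congr_ae hae, integral_const]
    simp
  · rw [if_neg h0]
    set a : Torus N := orbitHom γ' (Real.pi / t) with ha
    have hmem : a ∈ torusSubgroup γ' := orbit_mem γ' _
    have hval : char n a = -1 := by
      rw [ha, char_orbit n γ (Real.pi / t), ← ht]
      have htC : (t : ℂ) ≠ 0 := by exact_mod_cast h0
      have : (t : ℂ) * I * ((Real.pi / t : ℝ) : ℂ) = Real.pi * I := by
        push_cast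
        field_simp
      rw [this, Complex.exp_pi_mul_I]
    have hint : Integrable (char n) ω := integrable_cont _ _
    have key : ∫ x, char n x ∂ω = (∫ x, char n x ∂ω) * (char n a) := by
      conv_lhs => rw [← hinv a hmem]
      rw [integral_map (by fun_prop) ((char n).continuous.aestronglyMeasurable)]
      simp only [char_add_point n _ a]
      rw [integral_mul_const]
    rw [hval, mul_neg_one] at key
    have : ∫ x, char n x ∂ω + ∫ x, char n x ∂ω = 0 := by
      nth_rewrite 1 [key]; ring
    simpa [add_self_eq_zero] using this


section LimitPart



lemma orbit_continuous (γ : Fin N → ℝ) : Continuous (fun y : ℝ => orbitHom γ y) := by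
  refine continuous_pi fun i => ?_
  exact continuous_quotient_mk'.comp (continuous_id.mul continuous_const)

variable (γ : Fin N → ℝ) (ω : Measure (Torus N)) [IsProbabilityMeasure ω]

/-- The set of continuous functions whose logarithmic averages along the orbit converge to
their integral against `ω`, as a submodule. -/
def limSet : Submodule ℂ C(Torus N, ℂ) where
  carrier := {g | Tendsto (fun Y : ℝ => (1/(Y:ℂ)) * ∫ y in (2:ℝ)..Y, g (orbitHom γ y))
    atTop (𝓝 (∫ x, g x ∂ω))}
  zero_mem' := by
    simp only [Set.mem_setOf_eq, ContinuousMap.zero_apply]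
    simpa using tendsto_const_nhds
  add_mem' := by
    intro g p hg hp
    simp only [Set.mem_setOf_eq, ContinuousMap.add_apply] at *
    have hig : ∀ Y : ℝ, IntervalIntegrable (fun y => g (orbitHom γ y)) volume 2 Y := fun Y =>
      (g.continuous.comp (orbit_continuous γ)).intervalIntegrable _ _
    have hip : ∀ Y : ℝ, IntervalIntegrable (fun y => p (orbitHom γ y)) volume 2 Y := fun Y =>
      (p.continuous.comp (orbit_continuous γ)).intervalIntegrable _ _
    have heq : ∀ Y : ℝ, (1/(Y:ℂ)) * ∫ y in (2:ℝ)..Y, (g (orbitHom γ y) + p (orbitHom γ y))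
        = (1/(Y:ℂ)) * (∫ y in (2:ℝ)..Y, g (orbitHom γ y))
          + (1/(Y:ℂ)) * (∫ y in (2:ℝ)..Y, p (orbitHom γ y)) := by
      intro Y
      rw [intervalIntegral.integral_add (hig Y) (hip Y), mul_add]
    rw [integral_add (g.continuous.integrable_of_hasCompactSupport
        (HasCompactSupport.of_compactSpace _))
      (p.continuous.integrable_of_hasCompactSupport (HasCompactSupport.of_compactSpace _))]
    simpa only [heq] using hg.add hp
  smul_mem' := by
    intro c g hg
    simp only [Set.mem_setOf_eq] at *
    have key : ∀ x, (c • g) x = c * g x := fun _ => rfl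
    simp only [key]
    have heq : ∀ Y : ℝ, (1/(Y:ℂ)) * ∫ y in (2:ℝ)..Y, c * g (orbitHom γ y)
        = c * ((1/(Y:ℂ)) * ∫ y in (2:ℝ)..Y, g (orbitHom γ y)) := by
      intro Y
      rw [intervalIntegral.integral_const_mul]
      ring
    rw [MeasureTheory.integral_const_mul]
    simpa only [heq] using hg.const_mul c

lemma limSet_closed : IsClosed ((limSet γ ω : Submodule ℂ C(Torus N, ℂ)) : Set C(Torus N, ℂ)) := by
  refine isClosed_of_closure_subset ?_
  intro g hg
  show Tendsto (fun Y : ℝ => (1/(Y:ℂ)) * ∫ y in (2:ℝ)..Y, g (orbitHom γ y))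
    atTop (𝓝 (∫ x, g x ∂ω))
  rw [Metric.tendsto_atTop]
  intro ε hε
  obtain ⟨p, hpP, hpd⟩ := Metric.mem_closure_iff.mp hg (ε/4) (by positivity)
  have hp : Tendsto (fun Y : ℝ => (1/(Y:ℂ)) * ∫ y in (2:ℝ)..Y, p (orbitHom γ y))
      atTop (𝓝 (∫ x, p x ∂ω)) := hpP
  rw [Metric.tendsto_atTop] at hp
  obtain ⟨M, hM⟩ := hp (ε/4) (by positivity)
  refine ⟨max M 2, fun Y hY => ?_⟩
  have hY2 : (2:ℝ) ≤ Y := le_trans (le_max_right _ _) hY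
  have hYM : M ≤ Y := le_trans (le_max_left _ _) hY
  have hY0 : (0:ℝ) < Y := lt_of_lt_of_le two_pos hY2
  have hig : IntervalIntegrable (fun y => g (orbitHom γ y)) volume 2 Y :=
    (g.continuous.comp (orbit_continuous γ)).intervalIntegrable _ _
  have hip : IntervalIntegrable (fun y => p (orbitHom γ y)) volume 2 Y :=
    (p.continuous.comp (orbit_continuous γ)).intervalIntegrable _ _
  have hAb : dist ((1/(Y:ℂ)) * ∫ y in (2:ℝ)..Y, g (orbitHom γ y))
      ((1/(Y:ℂ)) * ∫ y in (2:ℝ)..Y, p (orbitHom γ y)) ≤ dist g p := by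
    rw [dist_eq_norm, ← mul_sub, ← intervalIntegral.integral_sub hig hip, norm_mul]
    have hb : ∀ y ∈ Set.uIoc (2:ℝ) Y, ‖g (orbitHom γ y) - p (orbitHom γ y)‖ ≤ dist g p := by
      intro y _
      rw [← dist_eq_norm]
      exact ContinuousMap.dist_apply_le_dist _
    have h1 : ‖∫ y in (2:ℝ)..Y, (g (orbitHom γ y) - p (orbitHom γ y))‖ ≤ dist g p * |Y - 2| :=
      intervalIntegral.norm_integral_le_of_norm_le_const hb
    have h2 : ‖(1/(Y:ℂ))‖ = 1/Y := by
      rw [norm_div, norm_one, Complex.norm_real, Real.norm_eq_abs, abs_of_pos hY0]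
    calc ‖(1/(Y:ℂ))‖ * ‖∫ y in (2:ℝ)..Y, (g (orbitHom γ y) - p (orbitHom γ y))‖
        ≤ (1/Y) * (dist g p * |Y - 2|) := by rw [h2]; gcongr
      _ ≤ dist g p := by
          rw [_root_.abs_of_nonneg (by linarith : (0:ℝ) ≤ Y - 2), div_mul_eq_mul_div,
            div_le_iff₀ hY0]
          nlinarith [dist_nonneg (x := g) (y := p)]
  have hLb : dist (∫ x, p x ∂ω) (∫ x, g x ∂ω) ≤ dist g p := by
    rw [dist_eq_norm, ← integral_sub
      (p.continuous.integrable_of_hasCompactSupport (HasCompactSupport.of_compactSpace _))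
      (g.continuous.integrable_of_hasCompactSupport (HasCompactSupport.of_compactSpace _))]
    have := norm_integral_le_of_norm_le_const (μ := ω)
      (C := dist g p) (f := fun x => p x - g x) ?_
    · simpa using this
    · filter_upwards with x
      rw [← dist_eq_norm]
      calc dist (p x) (g x) = dist (g x) (p x) := dist_comm _ _
        _ ≤ dist g p := ContinuousMap.dist_apply_le_dist x
  calc dist ((1/(Y:ℂ)) * ∫ y in (2:ℝ)..Y, g (orbitHom γ y)) (∫ x, g x ∂ω)
      ≤ dist ((1/(Y:ℂ)) * ∫ y in (2:ℝ)..Y, g (orbitHom γ y))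
          ((1/(Y:ℂ)) * ∫ y in (2:ℝ)..Y, p (orbitHom γ y))
        + dist ((1/(Y:ℂ)) * ∫ y in (2:ℝ)..Y, p (orbitHom γ y)) (∫ x, p x ∂ω)
        + dist (∫ x, p x ∂ω) (∫ x, g x ∂ω) := dist_triangle4 _ _ _ _
    _ < ε := by
        have := hM Y hYM
        have h3 := hAb
        have h4 := hLb
        linarith [hpd]


end LimitPart


section StoneWeierstrassPart

/-- The linear span of the characters. -/
def charSubmodule : Submodule ℂ C(Torus N, ℂ) := Submodule.span ℂ (Set.range (char (N := N)))

lemma one_mem_charSubmodule : (1 : C(Torus N, ℂ)) ∈ charSubmodule (N := N) :=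
  char_zero' (N := N) ▸ Submodule.subset_span ⟨0, rfl⟩

lemma mul_mem_charSubmodule : ∀ x y : C(Torus N, ℂ),
    x ∈ charSubmodule (N := N) → y ∈ charSubmodule (N := N) → x * y ∈ charSubmodule (N := N) := by
  intro x y hx hy
  have h2 : charSubmodule (N := N) * charSubmodule (N := N) ≤ charSubmodule (N := N) := by
    rw [charSubmodule, Submodule.span_mul_span]
    refine Submodule.span_le.mpr ?_
    rintro z hz
    rw [Set.mem_mul] at hz
    obtain ⟨a, ha, b, hb, rfl⟩ := hz
    obtain ⟨n, rfl⟩ := ha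
    obtain ⟨mm, rfl⟩ := hb
    rw [char_mul]
    exact Submodule.subset_span ⟨n + mm, rfl⟩
  exact h2 (Submodule.mul_mem_mul hx hy)

/-- The star subalgebra generated by the characters (with carrier their linear span). -/
def charAlg : StarSubalgebra ℂ C(Torus N, ℂ) :=
  { (charSubmodule (N := N)).toSubalgebra one_mem_charSubmodule mul_mem_charSubmodule with
    star_mem' := by
      intro x hx
      induction hx using Submodule.span_induction with
      | mem g hg =>
          obtain ⟨n, rfl⟩ := hg
          rw [star_char]
          exact Submodule.subset_span ⟨-n, rfl⟩
      | zero => simpa using (charSubmodule (N := N)).zero_mem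
      | add a b _ _ ha hb => rw [star_add]; exact Submodule.add_mem _ ha hb
      | smul c a _ ha => rw [star_smul]; exact Submodule.smul_mem _ _ ha }

lemma charAlg_coe : ((charAlg (N := N)) : Set C(Torus N, ℂ)) = (charSubmodule (N := N) : Set C(Torus N, ℂ)) := rfl

lemma charAlg_sep : (charAlg (N := N)).SeparatesPoints := by
  intro θ η hne
  obtain ⟨k, hk⟩ : ∃ k, θ k ≠ η k := by
    by_contra hall
    push_neg at hall
    exact hne (funext hall)
  refine ⟨_, ⟨char (Pi.single k 1), Submodule.subset_span ⟨_, rfl⟩, rfl⟩, ?_⟩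
  show char (Pi.single k 1) θ ≠ char (Pi.single k 1) η
  rw [char_single, char_single]
  intro hEq
  exact hk (AddCircle.injective_toCircle one_ne_zero (Circle.coe_injective hEq))

lemma dense_charSubmodule :
    closure ((charSubmodule (N := N)) : Set C(Torus N, ℂ)) = Set.univ := by
  have h1 := ContinuousMap.starSubalgebra_topologicalClosure_eq_top_of_separatesPoints
    (charAlg (N := N)) charAlg_sep
  have h2 : ((charAlg (N := N)).topologicalClosure : Set C(Torus N, ℂ))
      = closure ((charAlg (N := N)) : Set C(Torus N, ℂ)) := rfl
  rw [h1] at h2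
  rw [← charAlg_coe, ← h2]
  rfl

end StoneWeierstrassPart

section Equidistribution

variable (γ : Fin N → ℝ)

/-- The equidistribution theorem: logarithmic averages along the orbit converge to the
integral against the Haar measure of the closure of the orbit. -/
theorem equidistribution (ω : Measure (Torus N)) [IsProbabilityMeasure ω]
    (hω : IsHaarOn (torusSubgroup (fun j => γ j / (2 * Real.pi))) ω) (g : C(Torus N, ℂ)) :
    Tendsto (fun Y : ℝ => (1/(Y:ℂ)) * ∫ y in (2:ℝ)..Y,
        g (orbitHom (fun j => γ j / (2 * Real.pi)) y))
      atTop (𝓝 (∫ x, g x ∂ω)) := by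
  set γ' := fun j => γ j / (2 * Real.pi) with hγ'
  have hP : ((charSubmodule (N := N)) : Set C(Torus N, ℂ)) ⊆ ((limSet γ' ω) : Set C(Torus N, ℂ)) := by
    have hle : charSubmodule (N := N) ≤ limSet γ' ω := by
      rw [charSubmodule]
      refine Submodule.span_le.mpr ?_
      rintro f ⟨n, rfl⟩
      show Tendsto (fun Y : ℝ => (1/(Y:ℂ)) * ∫ y in (2:ℝ)..Y, char n (orbitHom γ' y))
        atTop (𝓝 (∫ x, char n x ∂ω))
      have hW := weyl_tendsto (∑ k, (n k : ℝ) * γ k)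
      rw [integral_char γ ω hω n]
      refine hW.congr fun Y => ?_
      congr 1
      exact (intervalIntegral.integral_congr fun y _ => (char_orbit n γ y)).symm
    exact hle
  have hclosed := limSet_closed γ' ω
  have hgmem : g ∈ closure ((charSubmodule (N := N)) : Set C(Torus N, ℂ)) := by
    rw [dense_charSubmodule]; trivial
  exact (closure_minimal hP hclosed) hgmem

end Equidistribution

end Stmt6Aux

end

lemma f_cont {N : ℕ} (β : ℝ) (γ : Fin N → ℝ) (c : Fin N → ℂ) (m : ℝ) :
    Continuous (fun θ : Torus N =>
      m - ∑ k, 2 * (c k * ((θ k).toCircle : ℂ) / ((β : ℂ) + I * (γ k : ℂ))).re) := by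
  refine continuous_const.sub (continuous_finset_sum _ fun k _ => ?_)
  have h0 : Continuous fun θ : Torus N => (θ k).toCircle :=
    AddCircle.continuous_toCircle.comp (continuous_apply k)
  have h1 : Continuous fun θ : Torus N => ((θ k).toCircle : ℂ) :=
    continuous_subtype_val.comp h0
  have h2 : Continuous fun θ : Torus N =>
      c k * ((θ k).toCircle : ℂ) / ((β : ℂ) + I * (γ k : ℂ)) :=
    (continuous_const.mul h1).div_const _
  exact continuous_const.mul (Complex.continuous_re.comp h2)

noncomputable section Final

open Stmt6Aux

/-- `G(x) = m − Σ_k 2 Re(c_k e^{iγ_k log x}/(β + iγ_k))` has a limiting logarithmic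
distribution `μ`, namely the pushforward of the normalized Haar measure on
`A(γ₁/2π,…,γ_N/2π)` under `(θ₁,…,θ_N) ↦ m − Σ_k 2 Re(c_k e^{2πiθ_k}/(β + iγ_k))`. -/
theorem stmt6 (N : ℕ) (β m : ℝ) (hβ : 0 < β) (γ : Fin N → ℝ)
    (hpos : ∀ k, 0 < γ k) (hinj : Function.Injective γ) (c : Fin N → ℂ) :
    ∃ ω : Measure (Fin N → AddCircle (1 : ℝ)),
      IsHaarOn (torusSubgroup (fun k => γ k / (2 * Real.pi))) ω ∧
      HasLimitingLogDistribution
        (fun x : ℝ => m - ∑ k, 2 * (c k * Complex.exp (I * (γ k * Real.log x)) /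
          ((β : ℂ) + I * (γ k : ℂ))).re)
        (ω.map (fun θ : Fin N → AddCircle (1 : ℝ) =>
          m - ∑ k, 2 * (c k * ((θ k).toCircle : ℂ) / ((β : ℂ) + I * (γ k : ℂ))).re)) := by
  classical
  have hclosed := torusSubgroup_isClosed (fun k => γ k / (2 * Real.pi)) (N := N)
  set ω := haarA (torusSubgroup (fun k => γ k / (2 * Real.pi))) hclosed with hωdef
  haveI hprob : IsProbabilityMeasure ω := haarA_prob _ _
  have hHaar : IsHaarOn (torusSubgroup (fun k => γ k / (2 * Real.pi))) ω := haarA_isHaarOn _ _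
  refine ⟨ω, hHaar, ?_, ?_⟩
  · -- probability of pushforward
    exact Measure.isProbabilityMeasure_map (f_cont β γ c m).aemeasurable
  · intro g hgLip hgBd
    obtain ⟨C, hC⟩ := hgLip
    have hgc : Continuous g := hC.continuous
    set f : C(Torus N, ℝ) := ⟨fun θ =>
        m - ∑ k, 2 * (c k * ((θ k).toCircle : ℂ) / ((β : ℂ) + I * (γ k : ℂ))).re,
      f_cont β γ c m⟩ with hfdef
    set gc : C(Torus N, ℂ) := ⟨fun θ => ((g (f θ) : ℝ) : ℂ),
      Complex.continuous_ofReal.comp (hgc.comp f.continuous)⟩ with hgcdef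
    have hmain := equidistribution γ ω hHaar gc
    -- pointwise identification of the integrand
    have hpt : ∀ y : ℝ,
        m - ∑ k, 2 * (c k * Complex.exp (I * (γ k * Real.log (Real.exp y))) /
          ((β : ℂ) + I * (γ k : ℂ))).re
        = f (orbitHom (fun k => γ k / (2 * Real.pi)) y) := by
      intro y
      show _ = m - ∑ k, 2 * (c k *
        ((AddCircle.toCircle ((orbitHom (fun k => γ k / (2 * Real.pi)) y) k) : Circle) : ℂ) /
          ((β : ℂ) + I * (γ k : ℂ))).re
      congr 1
      refine Finset.sum_congr rfl fun k _ => ?_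
      rw [toCircle_orbit γ y k, Circle.coe_exp, Real.log_exp]
      congr 3
      push_cast
      ring
    -- realify the main limit
    have hre : ∀ Y : ℝ, (1/(Y:ℂ)) * ∫ y in (2:ℝ)..Y,
        gc (orbitHom (fun k => γ k / (2 * Real.pi)) y)
        = (((1/Y) * ∫ y in (2:ℝ)..Y, g (f (orbitHom (fun k => γ k / (2 * Real.pi)) y)) : ℝ) : ℂ) := by
      intro Y
      have : ∫ y in (2:ℝ)..Y, gc (orbitHom (fun k => γ k / (2 * Real.pi)) y)
          = ((∫ y in (2:ℝ)..Y, g (f (orbitHom (fun k => γ k / (2 * Real.pi)) y)) : ℝ) : ℂ) :=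
        intervalIntegral.integral_ofReal
      rw [this]
      push_cast
      ring
    have hL : ∫ x, gc x ∂ω = ((∫ x, g (f x) ∂ω : ℝ) : ℂ) := integral_ofReal
    rw [hL] at hmain
    simp only [hre] at hmain
    have hreal : Tendsto (fun Y : ℝ => (1/Y) * ∫ y in (2:ℝ)..Y,
        g (f (orbitHom (fun k => γ k / (2 * Real.pi)) y))) atTop (𝓝 (∫ x, g (f x) ∂ω)) := by
      have h5 := (Complex.continuous_re.tendsto _).comp hmain
      have h6 : (fun Y : ℝ => (1/Y) * ∫ y in (2:ℝ)..Y,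
          g (f (orbitHom (fun k => γ k / (2 * Real.pi)) y)))
          = Complex.re ∘ (fun Y : ℝ => (((1/Y) * ∫ y in (2:ℝ)..Y,
            g (f (orbitHom (fun k => γ k / (2 * Real.pi)) y)) : ℝ) : ℂ)) := by
        funext Y; simp
      rw [h6]
      simpa using h5
    have hmap : ∫ t, g t ∂(ω.map (fun θ : Fin N → AddCircle (1 : ℝ) =>
        m - ∑ k, 2 * (c k * ((θ k).toCircle : ℂ) / ((β : ℂ) + I * (γ k : ℂ))).re))
        = ∫ x, g (f x) ∂ω := by
      rw [show (fun θ : Fin N → AddCircle (1 : ℝ) =>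
        m - ∑ k, 2 * (c k * ((θ k).toCircle : ℂ) / ((β : ℂ) + I * (γ k : ℂ))).re) = ⇑f from rfl]
      exact integral_map f.continuous.aemeasurable hgc.aestronglyMeasurable
    rw [hmap]
    refine hreal.congr fun Y => ?_
    congr 1
    refine (intervalIntegral.integral_congr fun y _ => ?_).symm
    exact congrArg g (hpt y)

end Final
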